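/- arXiv:0805.3205 — 9 statements merged into one kernel-verified Lean document; each statement's English description precedes it below -/
import Mathlib

section
/- Let Θ ⊆ ℝ be an interval, let a₁, a₂, b₁, b₂ ≥ 0 with a₁ + a₂ > 0 and b₁ + b₂ > 0, and let π : Θ → [0,∞) be a measurable probability density (∫_Θ π(θ) dθ = 1) such that a₂π(θ) + b₂ > 0 whenever b₁ ≤ (a₁+a₂)π(θ). Define I_π : Θ → [0,1] by I_π(θ) = 0 if (a₁+a₂)π(θ) < b₁; I_π(θ) = ((a₁+a₂)π(θ) − b₁)/(a₂π(θ) + b₂) if b₁ ≤ (a₁+a₂)π(θ) and a₁π(θ) ≤ b₁ + b₂; and I_π(θ) = 1 if a₁π(θ) > b₁ + b₂. Then for every measurable function I : Θ → [0,1], R(I_π) ≤ R(I), where R(I) = ∫_Θ [ (a₁(1−I(θ)) + (a₂/2)(1−I(θ))²) π(θ) + b₁ I(θ) + (b₂/2) I(θ)² ] dθ (the integral taken with values in [0,∞]). -/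
open MeasureTheory

/-- The Theorem-1 solution (optimal membership function) associated with the
prior density `π` and the loss parameters `a₁, a₂, b₁, b₂`. -/
noncomputable def thmOneSol (a1 a2 b1 b2 : ℝ) (pr : ℝ → ℝ) (θ : ℝ) : ℝ :=
  if (a1 + a2) * pr θ < b1 then 0
  else if a1 * pr θ ≤ b1 + b2 then ((a1 + a2) * pr θ - b1) / (a2 * pr θ + b2)
  else 1

/-- The Bayes risk of a membership function `I` under the prior density `π`
on `Θ`, for the loss of equation (1); the integral is taken in `[0,∞]`. -/
noncomputable def risk (Θ : Set ℝ) (a1 a2 b1 b2 : ℝ) (pr I : ℝ → ℝ) : ENNReal :=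
  ∫⁻ θ in Θ, ENNReal.ofReal
    ((a1 * (1 - I θ) + a2 / 2 * (1 - I θ) ^ 2) * pr θ
      + b1 * I θ + b2 / 2 * (I θ) ^ 2)

/-- Pointwise optimality of the Theorem-1 solution. -/
lemma thmOneSol_pointwise (a1 a2 b1 b2 p t : ℝ)
    (ha1 : 0 ≤ a1) (ha2 : 0 ≤ a2) (hb1 : 0 ≤ b1) (hb2 : 0 ≤ b2)
    (hp : 0 ≤ p) (hden : b1 ≤ (a1 + a2) * p → 0 < a2 * p + b2)
    (ht0 : 0 ≤ t) (ht1 : t ≤ 1)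
    (s : ℝ)
    (hs : s = if (a1 + a2) * p < b1 then 0
      else if a1 * p ≤ b1 + b2 then ((a1 + a2) * p - b1) / (a2 * p + b2)
      else 1) :
    (a1 * (1 - s) + a2 / 2 * (1 - s) ^ 2) * p + b1 * s + b2 / 2 * s ^ 2
      ≤ (a1 * (1 - t) + a2 / 2 * (1 - t) ^ 2) * p + b1 * t + b2 / 2 * t ^ 2 := by
  by_cases h1 : (a1 + a2) * p < b1
  · simp only [h1, if_true] at hs
    subst hs
    nlinarith [mul_nonneg (mul_nonneg ha2 hp) (sq_nonneg t), mul_nonneg hb2 (sq_nonneg t),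
      mul_nonneg ht0 (sub_pos.mpr h1).le]
  · push_neg at h1
    have hA : 0 < a2 * p + b2 := hden h1
    by_cases h2 : a1 * p ≤ b1 + b2
    · simp only [if_neg (not_lt.mpr h1), h2, if_true] at hs
      have hAs : (a2 * p + b2) * s = (a1 + a2) * p - b1 := by
        rw [hs]; field_simp
      nlinarith [sq_nonneg ((a2 * p + b2) * t - ((a1 + a2) * p - b1)), hA,
        mul_pos hA hA]
    · simp only [if_neg (not_lt.mpr h1), if_neg h2] at hs
      subst hs
      push_neg at h2
      -- here (a1+a2)p - b1 > a2 p + b2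
      nlinarith [mul_nonneg (sub_nonneg.mpr ht1) (mul_nonneg ha2 hp),
        mul_nonneg (sub_nonneg.mpr ht1) hb2,
        mul_nonneg (sub_nonneg.mpr ht1) (sub_pos.mpr h2).le]

/-- Theorem 1 of the paper: the membership function `I_π` of
equation (2) minimizes the Bayes risk among all measurable membership
functions `I : Θ → [0,1]`. -/
theorem stmt1 (Θ : Set ℝ) (hΘ : Θ.OrdConnected) (hΘm : MeasurableSet Θ)
    (a1 a2 b1 b2 : ℝ)
    (ha1 : 0 ≤ a1) (ha2 : 0 ≤ a2) (hb1 : 0 ≤ b1) (hb2 : 0 ≤ b2)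
    (ha : 0 < a1 + a2) (hb : 0 < b1 + b2)
    (pr : ℝ → ℝ) (hprm : Measurable pr) (hpr0 : ∀ θ ∈ Θ, 0 ≤ pr θ)
    (hprdens : ∫⁻ θ in Θ, ENNReal.ofReal (pr θ) = 1)
    (hden : ∀ θ ∈ Θ, b1 ≤ (a1 + a2) * pr θ → 0 < a2 * pr θ + b2) :
    ∀ I : ℝ → ℝ, Measurable I → (∀ θ ∈ Θ, I θ ∈ Set.Icc (0 : ℝ) 1) →
      risk Θ a1 a2 b1 b2 pr (thmOneSol a1 a2 b1 b2 pr)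
        ≤ risk Θ a1 a2 b1 b2 pr I := by
  intro I hIm hI01
  unfold risk
  apply setLIntegral_mono
  · exact ((((((hIm.const_sub 1).const_mul a1).add
      (((hIm.const_sub 1).pow_const 2).const_mul (a2/2))).mul hprm).add
      (hIm.const_mul b1)).add ((hIm.pow_const 2).const_mul (b2/2))).ennreal_ofReal
  · intro θ hθ
    apply ENNReal.ofReal_le_ofReal
    exact thmOneSol_pointwise a1 a2 b1 b2 (pr θ) (I θ) ha1 ha2 hb1 hb2
      (hpr0 θ hθ) (hden θ hθ) (hI01 θ hθ).1 (hI01 θ hθ).2 _ rfl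
end

section
/- Let Θ ⊆ ℝ be an interval, let a₁, a₂, b₁, b₂ ≥ 0 with a₁ + a₂ > 0 and b₂ > 0, let π : Θ → [0,∞) be a measurable probability density, and let I_π be the Theorem-1 solution associated with π. If I : Θ → [0,1] is measurable and R(I) = R(I_π) < ∞, then I(θ) = I_π(θ) for Lebesgue-almost every θ ∈ Θ. (When b₂ > 0 the integrand is strictly convex in the membership value at every θ, so the minimizer is almost-everywhere unique.) -/
open MeasureTheory

/-- The pointwise loss. -/
noncomputable def ptLoss (a1 a2 b1 b2 p t : ℝ) : ℝ :=
  (a1 * (1 - t) + a2 / 2 * (1 - t) ^ 2) * p + b1 * t + b2 / 2 * t ^ 2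

lemma ptLoss_nonneg {a1 a2 b1 b2 p t : ℝ}
    (ha1 : 0 ≤ a1) (ha2 : 0 ≤ a2) (hb1 : 0 ≤ b1) (hb2 : 0 < b2)
    (hp : 0 ≤ p) (ht0 : 0 ≤ t) (ht1 : t ≤ 1) : 0 ≤ ptLoss a1 a2 b1 b2 p t := by
  unfold ptLoss
  have h1 : (0:ℝ) ≤ 1 - t := by linarith
  have : 0 ≤ (a1 * (1 - t) + a2 / 2 * (1 - t) ^ 2) * p := by positivity
  nlinarith [sq_nonneg t]

lemma thmOneSol_mem {a1 a2 b1 b2 : ℝ} (pr : ℝ → ℝ) (θ : ℝ)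
    (ha1 : 0 ≤ a1) (ha2 : 0 ≤ a2) (hb1 : 0 ≤ b1) (hb2 : 0 < b2)
    (hp : 0 ≤ pr θ) :
    thmOneSol a1 a2 b1 b2 pr θ ∈ Set.Icc (0:ℝ) 1 := by
  unfold thmOneSol
  set p := pr θ
  have hc2 : 0 < a2 * p + b2 := by positivity
  split_ifs with h1 h2
  · exact ⟨le_refl _, zero_le_one⟩
  · constructor
    · apply div_nonneg _ hc2.le; linarith [not_lt.mp h1]
    · rw [div_le_one hc2]; linarith
  · exact ⟨zero_le_one, le_refl _⟩

/-- Key pointwise fact: the Theorem-1 value is the strict minimizer of the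
pointwise loss over `[0,1]`. -/
lemma ptLoss_key {a1 a2 b1 b2 p t : ℝ}
    (ha1 : 0 ≤ a1) (ha2 : 0 ≤ a2) (hb1 : 0 ≤ b1) (hb2 : 0 < b2)
    (hp : 0 ≤ p) (ht0 : 0 ≤ t) (ht1 : t ≤ 1) (s : ℝ)
    (hs : s = if (a1 + a2) * p < b1 then 0
      else if a1 * p ≤ b1 + b2 then ((a1 + a2) * p - b1) / (a2 * p + b2) else 1) :
    ptLoss a1 a2 b1 b2 p s ≤ ptLoss a1 a2 b1 b2 p t ∧
      (ptLoss a1 a2 b1 b2 p t = ptLoss a1 a2 b1 b2 p s → t = s) := by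
  have hc2 : 0 < a2 * p + b2 := by positivity
  unfold ptLoss
  split_ifs at hs with h1 h2
  · -- s = 0, c1 := b1 - (a1+a2)*p > 0
    subst hs
    constructor
    · nlinarith [sq_nonneg t]
    · intro h
      by_contra hne
      have htpos : 0 < t := lt_of_le_of_ne ht0 (Ne.symm hne)
      nlinarith [sq_nonneg t, mul_pos htpos htpos]
  · -- interior case
    have hseq : (a2 * p + b2) * s = (a1 + a2) * p - b1 := by
      rw [hs]; field_simp
    have hid : ((a1 * (1 - t) + a2 / 2 * (1 - t) ^ 2) * p + b1 * t + b2 / 2 * t ^ 2)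
        - ((a1 * (1 - s) + a2 / 2 * (1 - s) ^ 2) * p + b1 * s + b2 / 2 * s ^ 2)
        = (a2 * p + b2) / 2 * (t - s) ^ 2 := by
      linear_combination (t - s) * hseq
    constructor
    · nlinarith [sq_nonneg (t - s)]
    · intro h
      have h2 : (a2 * p + b2) / 2 * (t - s) ^ 2 = 0 := by linarith [hid, h.ge, h.le]
      have : (t - s) ^ 2 = 0 := by
        rcases mul_eq_zero.mp h2 with h' | h'
        · exfalso; nlinarith
        · exact h'
      have := pow_eq_zero_iff (n := 2) (by norm_num) |>.mp this
      linarith [sub_eq_zero.mp this]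
  · -- s = 1
    subst hs
    have h3 : b1 + b2 < a1 * p := not_le.mp h2
    constructor
    · nlinarith [sq_nonneg (t - 1)]
    · intro h
      by_contra hne
      have htlt : t < 1 := lt_of_le_of_ne ht1 hne
      nlinarith [sq_nonneg (t - 1), mul_pos (sub_pos.mpr htlt : (0:ℝ) < 1 - t) (sub_pos.mpr htlt)]

/-- when `b₂ > 0` the minimizer of the risk is unique up to a
Lebesgue-null set: any measurable membership function achieving the (finite)
minimal risk agrees with the Theorem-1 solution almost everywhere on `Θ`. -/
theorem stmt2 (Θ : Set ℝ) (hΘ : Θ.OrdConnected) (hΘm : MeasurableSet Θ)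
    (a1 a2 b1 b2 : ℝ)
    (ha1 : 0 ≤ a1) (ha2 : 0 ≤ a2) (hb1 : 0 ≤ b1) (hb2 : 0 < b2)
    (ha : 0 < a1 + a2)
    (pr : ℝ → ℝ) (hprm : Measurable pr) (hpr0 : ∀ θ ∈ Θ, 0 ≤ pr θ)
    (hprdens : ∫⁻ θ in Θ, ENNReal.ofReal (pr θ) = 1)
    (I : ℝ → ℝ) (hIm : Measurable I) (hI01 : ∀ θ ∈ Θ, I θ ∈ Set.Icc (0 : ℝ) 1)
    (heq : risk Θ a1 a2 b1 b2 pr I = risk Θ a1 a2 b1 b2 pr (thmOneSol a1 a2 b1 b2 pr))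
    (hfin : risk Θ a1 a2 b1 b2 pr (thmOneSol a1 a2 b1 b2 pr) < ⊤) :
    ∀ᵐ θ ∂(volume.restrict Θ), I θ = thmOneSol a1 a2 b1 b2 pr θ := by
  set S := thmOneSol a1 a2 b1 b2 pr with hS
  have hSm : Measurable S := by
    unfold S; unfold thmOneSol
    refine Measurable.ite (measurableSet_lt (by fun_prop) measurable_const)
      measurable_const ?_
    exact Measurable.ite (measurableSet_le (by fun_prop) measurable_const)
      (by fun_prop) measurable_const
  -- the two integrands
  set FI : ℝ → ℝ := fun θ => (a1 * (1 - I θ) + a2 / 2 * (1 - I θ) ^ 2) * pr θ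
      + b1 * I θ + b2 / 2 * (I θ) ^ 2 with hFI
  set FS : ℝ → ℝ := fun θ => (a1 * (1 - S θ) + a2 / 2 * (1 - S θ) ^ 2) * pr θ
      + b1 * S θ + b2 / 2 * (S θ) ^ 2 with hFS
  have hFIm : Measurable fun θ => ENNReal.ofReal (FI θ) := by fun_prop
  have hFSm : Measurable fun θ => ENNReal.ofReal (FS θ) := by fun_prop
  have hkey : ∀ θ ∈ Θ, FS θ ≤ FI θ ∧ (FI θ = FS θ → I θ = S θ) := by
    intro θ hθ
    have h := ptLoss_key ha1 ha2 hb1 hb2 (hpr0 θ hθ) (hI01 θ hθ).1 (hI01 θ hθ).2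
      (S θ) (by rw [hS]; rfl)
    exact ⟨h.1, h.2⟩
  have hle : ∀ᵐ θ ∂(volume.restrict Θ),
      ENNReal.ofReal (FS θ) ≤ ENNReal.ofReal (FI θ) := by
    rw [ae_restrict_iff' hΘm]
    exact ae_of_all _ fun θ hθ => ENNReal.ofReal_le_ofReal (hkey θ hθ).1
  have hfin' : ∫⁻ θ in Θ, ENNReal.ofReal (FS θ) ≠ ⊤ := by
    have := hfin
    simpa [risk, hFS] using this.ne
  have heq' : ∫⁻ θ in Θ, ENNReal.ofReal (FI θ)
      = ∫⁻ θ in Θ, ENNReal.ofReal (FS θ) := by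
    simpa [risk, hFI, hFS] using heq
  have hsub : ∫⁻ θ in Θ, (ENNReal.ofReal (FI θ) - ENNReal.ofReal (FS θ))
      = (∫⁻ θ in Θ, ENNReal.ofReal (FI θ)) - ∫⁻ θ in Θ, ENNReal.ofReal (FS θ) :=
    lintegral_sub hFSm hfin' hle
  have hzero : ∫⁻ θ in Θ, (ENNReal.ofReal (FI θ) - ENNReal.ofReal (FS θ)) = 0 := by
    rw [hsub, heq', tsub_self]
  have hdiff0 : ∀ᵐ θ ∂(volume.restrict Θ),
      ENNReal.ofReal (FI θ) - ENNReal.ofReal (FS θ) = 0 := by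
    exact (lintegral_eq_zero_iff (hFIm.sub hFSm)).mp hzero
  rw [ae_restrict_iff' hΘm] at hdiff0 ⊢
  filter_upwards [hdiff0] with θ hd hθ
  have hle' : ENNReal.ofReal (FI θ) ≤ ENNReal.ofReal (FS θ) := tsub_eq_zero_iff_le.mp (hd hθ)
  have hge' : ENNReal.ofReal (FS θ) ≤ ENNReal.ofReal (FI θ) :=
    ENNReal.ofReal_le_ofReal (hkey θ hθ).1
  have heqE : ENNReal.ofReal (FI θ) = ENNReal.ofReal (FS θ) := le_antisymm hle' hge'
  have hSmem := thmOneSol_mem pr θ ha1 ha2 hb1 hb2 (hpr0 θ hθ)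
  have hFI0 : 0 ≤ FI θ :=
    ptLoss_nonneg ha1 ha2 hb1 hb2 (hpr0 θ hθ) (hI01 θ hθ).1 (hI01 θ hθ).2
  have hFS0 : 0 ≤ FS θ :=
    ptLoss_nonneg ha1 ha2 hb1 hb2 (hpr0 θ hθ) hSmem.1 hSmem.2
  have : FI θ = FS θ := by
    rwa [ENNReal.ofReal_eq_ofReal_iff hFI0 hFS0] at heqE
  exact (hkey θ hθ).2 this
end

section
/- Let Θ ⊆ ℝ be an interval, let a₁ > 0, a₂, b₁, b₂ ≥ 0 with b₁ + b₂ > 0, and let π : Θ → [0,∞) be a measurable probability density that is bounded away from zero, with inf_{θ∈Θ} π(θ) > (b₁ + b₂)/a₁. Then the Theorem-1 solution associated with π is identically one on Θ; equivalently, the membership function I ≡ 1 minimizes the risk R over all measurable I : Θ → [0,1], provided Θ has finite length (so that R(1) < ∞). -/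
open MeasureTheory

/-- if `a₁ > 0` and the prior density `π` is bounded away from
zero with `inf_{θ∈Θ} π(θ) > (b₁ + b₂)/a₁`, then the Theorem-1 solution is
identically one on `Θ`, and (when `Θ` has finite length) the membership
function `I ≡ 1` minimizes the risk. -/
theorem stmt5 (Θ : Set ℝ) (hΘ : Θ.OrdConnected) (hΘm : MeasurableSet Θ)
    (a1 a2 b1 b2 : ℝ)
    (ha1 : 0 < a1) (ha2 : 0 ≤ a2) (hb1 : 0 ≤ b1) (hb2 : 0 ≤ b2)
    (hb : 0 < b1 + b2)
    (pr : ℝ → ℝ) (hprm : Measurable pr) (hpr0 : ∀ θ ∈ Θ, 0 ≤ pr θ)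
    (hprdens : ∫⁻ θ in Θ, ENNReal.ofReal (pr θ) = 1)
    (hinf : (b1 + b2) / a1 < sInf (pr '' Θ))
    (hfin : volume Θ < ⊤) :
    (∀ θ ∈ Θ, thmOneSol a1 a2 b1 b2 pr θ = 1) ∧
    (∀ I : ℝ → ℝ, Measurable I → (∀ θ ∈ Θ, I θ ∈ Set.Icc (0 : ℝ) 1) →
      risk Θ a1 a2 b1 b2 pr (fun _ => 1) ≤ risk Θ a1 a2 b1 b2 pr I) := by
  have hbdd : BddBelow (pr '' Θ) := ⟨0, by rintro y ⟨θ, hθ, rfl⟩; exact hpr0 θ hθ⟩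
  have key : ∀ θ ∈ Θ, b1 + b2 < a1 * pr θ := by
    intro θ hθ
    have h1 : sInf (pr '' Θ) ≤ pr θ := csInf_le hbdd ⟨θ, hθ, rfl⟩
    have h2 : b1 + b2 < a1 * sInf (pr '' Θ) := by
      rw [div_lt_iff₀ ha1] at hinf; nlinarith
    nlinarith
  constructor
  · intro θ hθ
    have h := key θ hθ
    have hpr := hpr0 θ hθ
    unfold thmOneSol
    rw [if_neg (by nlinarith), if_neg (by nlinarith)]
  · intro I hIm hI01
    unfold risk
    apply setLIntegral_mono
    · apply Measurable.ennreal_ofReal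
      exact (((((measurable_const.sub hIm).const_mul a1).add
        (((measurable_const.sub hIm).pow measurable_const).const_mul (a2/2))).mul hprm).add
        (hIm.const_mul b1)).add ((hIm.pow measurable_const).const_mul (b2/2))
    · intro θ hθ
      apply ENNReal.ofReal_le_ofReal
      have h := key θ hθ
      have hpr := hpr0 θ hθ
      obtain ⟨h0, h1⟩ := hI01 θ hθ
      nlinarith [sq_nonneg (1 - I θ), mul_nonneg (mul_nonneg ha2 (sq_nonneg (1 - I θ))) hpr]
end

section
/- Let Θ ⊆ ℝ be a bounded interval of length ℓ > 0, let I_A : Θ → [0,1] be measurable with ∫_Θ I_A(θ) dθ > 0, let 0 ≤ r₁ < 1/ℓ, and let r₂ = r₁ + (1 − r₁ℓ)/∫_Θ I_A be the unique value making π_{A,r₁}(θ) = (r₂ − r₁)I_A(θ) + r₁ a probability density on Θ. Then, with a₂ = 0 and any a₁ > 0, b₁ ≥ 0, b₂ > 0 satisfying b₁/a₁ = r₁ and (b₁+b₂)/a₁ = r₂ (for instance a₁ = b₂/(r₂−r₁) and b₁ = r₁b₂/(r₂−r₁) for any b₂ > 0), the Theorem-1 solution associated with π_{A,r₁} equals I_A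 at every θ ∈ Θ. -/
open MeasureTheory

/-- with `a₂ = 0`, `r₁ = b₁/a₁`, `r₂ = (b₁+b₂)/a₁` and
`r₂ = r₁ + (1 − r₁ℓ)/∫_Θ I_A`, the Theorem-1 solution associated with the
prior `π_{A,r₁}(θ) = (r₂ − r₁) I_A(θ) + r₁` is exactly `I_A` on `Θ`. -/
theorem stmt10 (Θ : Set ℝ) (hΘ : Θ.OrdConnected) (hΘm : MeasurableSet Θ)
    (ℓ : ℝ) (hℓ : 0 < ℓ) (hvol : volume Θ = ENNReal.ofReal ℓ)
    (IA : ℝ → ℝ) (hIAm : Measurable IA)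
    (hIA01 : ∀ θ ∈ Θ, IA θ ∈ Set.Icc (0 : ℝ) 1)
    (hIApos : 0 < ∫ θ in Θ, IA θ)
    (r1 r2 : ℝ) (hr1 : 0 ≤ r1) (hr1ℓ : r1 < 1 / ℓ)
    (hr2 : r2 = r1 + (1 - r1 * ℓ) / ∫ θ in Θ, IA θ)
    (a1 b1 b2 : ℝ) (ha1 : 0 < a1) (hb1 : 0 ≤ b1) (hb2 : 0 < b2)
    (hra : b1 / a1 = r1) (hrb : (b1 + b2) / a1 = r2) :
    ∀ θ ∈ Θ, thmOneSol a1 0 b1 b2 (fun u => (r2 - r1) * IA u + r1) θ = IA θ := by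
  intro θ hθ
  have ha1' : a1 ≠ 0 := ne_of_gt ha1
  have hb1' : b1 = a1 * r1 := by field_simp at hra; linarith
  have hb12 : b1 + b2 = a1 * r2 := by field_simp at hrb; linarith
  have hIA := hIA01 θ hθ
  have hr12 : r1 ≤ r2 := by
    have h1 : r1 * ℓ < 1 := (lt_div_iff₀ hℓ).mp hr1ℓ
    have h2 : 0 ≤ (1 - r1 * ℓ) / ∫ θ in Θ, IA θ :=
      div_nonneg (by linarith) hIApos.le
    rw [hr2]; linarith
  have hpr1 : r1 ≤ (r2 - r1) * IA θ + r1 := by nlinarith [hIA.1, hIA.2]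
  have hpr2 : (r2 - r1) * IA θ + r1 ≤ r2 := by nlinarith [hIA.1, hIA.2]
  unfold thmOneSol
  simp only
  rw [if_neg, if_pos]
  · rw [hb1']
    have : (a1 + 0) * ((r2 - r1) * IA θ + r1) - a1 * r1 = (a1 * r2 - a1 * r1) * IA θ := by ring
    rw [this]
    have hb2' : a1 * r2 - a1 * r1 = b2 := by linarith
    rw [hb2']
    rw [zero_mul, zero_add, mul_div_cancel_left₀ _ hb2.ne']
  · rw [hb12]; nlinarith
  · rw [hb1']; push_neg; nlinarith
end

section
/- Let Θ ⊆ ℝ be a bounded interval, let 0 ≤ r₁ < r₂, let a₁ > 0, b₁ ≥ 0, b₂ > 0 with a₂ = 0 satisfy b₁/a₁ = r₁ and (b₁+b₂)/a₁ = r₂, and let I_A : Θ → [0,1] be measurable. Suppose π : Θ → [0,∞) is a measurable probability density satisfying: π(θ) ≤ r₁ whenever I_A(θ) = 0; π(θ) = (r₂ − r₁)I_A(θ) + r₁ whenever 0 < I_A(θ) < 1; and π(θ) ≥ r₂ whenever I_A(θ) = 1. Then the Theorem-1 solution associated with π equals I_A at every θ ∈ Θ. -/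
open MeasureTheory

/-- equation (8) of the paper: any probability density `π`
with `π ≤ r₁` on `{I_A = 0}`, `π = (r₂−r₁)I_A + r₁` on `{0 < I_A < 1}` and
`π ≥ r₂` on `{I_A = 1}` has Theorem-1 solution (with `a₂ = 0`,
`r₁ = b₁/a₁`, `r₂ = (b₁+b₂)/a₁`) equal to `I_A` on all of `Θ`. -/
theorem stmt11 (Θ : Set ℝ) (hΘ : Θ.OrdConnected) (hΘm : MeasurableSet Θ)
    (hΘbdd : Bornology.IsBounded Θ)
    (r1 r2 : ℝ) (hr1 : 0 ≤ r1) (hr12 : r1 < r2)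
    (a1 b1 b2 : ℝ) (ha1 : 0 < a1) (hb1 : 0 ≤ b1) (hb2 : 0 < b2)
    (hra : b1 / a1 = r1) (hrb : (b1 + b2) / a1 = r2)
    (IA : ℝ → ℝ) (hIAm : Measurable IA)
    (hIA01 : ∀ θ ∈ Θ, IA θ ∈ Set.Icc (0 : ℝ) 1)
    (pr : ℝ → ℝ) (hprm : Measurable pr) (hpr0 : ∀ θ ∈ Θ, 0 ≤ pr θ)
    (hprdens : (∫ θ in Θ, pr θ) = 1)
    (h0 : ∀ θ ∈ Θ, IA θ = 0 → pr θ ≤ r1)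
    (hmid : ∀ θ ∈ Θ, 0 < IA θ → IA θ < 1 → pr θ = (r2 - r1) * IA θ + r1)
    (h1 : ∀ θ ∈ Θ, IA θ = 1 → r2 ≤ pr θ) :
    ∀ θ ∈ Θ, thmOneSol a1 0 b1 b2 pr θ = IA θ := by
  intro θ hθ
  obtain ⟨hI0, hI1⟩ := hIA01 θ hθ
  have hb1e : b1 = r1 * a1 := by rw [div_eq_iff ha1.ne'] at hra; exact hra
  have hb2e : b1 + b2 = r2 * a1 := by rw [div_eq_iff ha1.ne'] at hrb; exact hrb
  unfold thmOneSol
  split_ifs with hc1 hc2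
  · -- pr θ < r1, so IA θ = 0
    rw [add_zero] at hc1
    rcases eq_or_lt_of_le hI0 with he | hlt
    · exact he
    rcases eq_or_lt_of_le hI1 with he | hlt1
    · exact absurd (h1 θ hθ he) (by nlinarith)
    have := hmid θ hθ hlt hlt1
    nlinarith
  · rw [add_zero] at hc1 ⊢
    rw [zero_mul, zero_add]
    push_neg at hc1
    rcases eq_or_lt_of_le hI0 with he | hlt
    · have hp := h0 θ hθ he.symm
      have : a1 * pr θ = b1 := by nlinarith
      rw [this, sub_self, zero_div]; exact he
    rcases eq_or_lt_of_le hI1 with he | hlt1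
    · have hp := h1 θ hθ he
      have : a1 * pr θ = b1 + b2 := by nlinarith
      rw [this, he]
      field_simp
      ring
    have hp := hmid θ hθ hlt hlt1
    rw [hp]
    field_simp
    nlinarith [hb1e, hb2e]
  · rw [add_zero] at hc1
    push_neg at hc1 hc2
    rcases eq_or_lt_of_le hI1 with he | hlt1
    · exact he.symm
    rcases eq_or_lt_of_le hI0 with he | hlt
    · have := h0 θ hθ he.symm; nlinarith
    have := hmid θ hθ hlt hlt1
    nlinarith
end

section
/- Let Θ ⊆ ℝ be a bounded interval of length ℓ > 0, let I_A : Θ → [0,1] be measurable with ∫_Θ I_A > 0, let 0 < r₁ < 1/ℓ, and let r₂ = r₁ + (1 − r₁ℓ)/∫_Θ I_A, π_{A,r₁}(θ) = (r₂ − r₁)I_A(θ) + r₁. Suppose the sets {θ : I_A(θ) = 0} and {θ : I_A(θ) = 1} each have positive Lebesgue measure. Then π_{A,r₁} is not the unique prior whose Theorem-1 solution (with a₂ = 0, r₁ = b₁/a₁, r₂ = (b₁+b₂)/a₁) equals I_A: there exists a measurable probability density π on Θ with π ≠ π_{A,r₁} on a set of positive Lebesgue measure such that the Theorem-1 solution associated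 with π equals I_A at every θ ∈ Θ. -/
open MeasureTheory

set_option maxHeartbeats 1000000 in
/-- if the sets `{I_A = 0}` and `{I_A = 1}` both have positive
Lebesgue measure (and `0 < r₁`), then `π_{A,r₁}` is not the unique prior whose
Theorem-1 solution equals `I_A`: there is a probability density `π` differing
from `π_{A,r₁}` on a set of positive measure whose Theorem-1 solution is also
`I_A` everywhere on `Θ`. -/
theorem stmt12 (Θ : Set ℝ) (hΘ : Θ.OrdConnected) (hΘm : MeasurableSet Θ)
    (ℓ : ℝ) (hℓ : 0 < ℓ) (hvol : volume Θ = ENNReal.ofReal ℓ)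
    (IA : ℝ → ℝ) (hIAm : Measurable IA)
    (hIA01 : ∀ θ ∈ Θ, IA θ ∈ Set.Icc (0 : ℝ) 1)
    (hIApos : 0 < ∫ θ in Θ, IA θ)
    (r1 r2 : ℝ) (hr1 : 0 < r1) (hr1ℓ : r1 < 1 / ℓ)
    (hr2 : r2 = r1 + (1 - r1 * ℓ) / ∫ θ in Θ, IA θ)
    (a1 b1 b2 : ℝ) (ha1 : 0 < a1) (hb1 : 0 ≤ b1) (hb2 : 0 < b2)
    (hra : b1 / a1 = r1) (hrb : (b1 + b2) / a1 = r2)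
    (hzero : 0 < volume {θ ∈ Θ | IA θ = 0})
    (hone : 0 < volume {θ ∈ Θ | IA θ = 1}) :
    ∃ pr : ℝ → ℝ, Measurable pr ∧ (∀ θ ∈ Θ, 0 ≤ pr θ) ∧
      (∫ θ in Θ, pr θ) = 1 ∧
      0 < volume {θ ∈ Θ | pr θ ≠ (r2 - r1) * IA θ + r1} ∧
      ∀ θ ∈ Θ, thmOneSol a1 0 b1 b2 pr θ = IA θ := by
  classical
  set S0 : Set ℝ := {θ ∈ Θ | IA θ = 0} with hS0def
  set S1 : Set ℝ := {θ ∈ Θ | IA θ = 1} with hS1def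
  have hS0m : MeasurableSet S0 := by
    have : S0 = Θ ∩ IA ⁻¹' {0} := by ext x; simp [hS0def, Set.mem_sep_iff, and_comm]
    rw [this]; exact hΘm.inter (hIAm (measurableSet_singleton 0))
  have hS1m : MeasurableSet S1 := by
    have : S1 = Θ ∩ IA ⁻¹' {1} := by ext x; simp [hS1def, Set.mem_sep_iff, and_comm]
    rw [this]; exact hΘm.inter (hIAm (measurableSet_singleton 1))
  have hS0Θ : S0 ⊆ Θ := fun x hx => hx.1
  have hS1Θ : S1 ⊆ Θ := fun x hx => hx.1
  have hvolΘfin : volume Θ ≠ ⊤ := by rw [hvol]; exact ENNReal.ofReal_ne_top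
  have hS0fin : volume S0 ≠ ⊤ := ne_top_of_le_ne_top hvolΘfin (measure_mono hS0Θ)
  have hS1fin : volume S1 ≠ ⊤ := ne_top_of_le_ne_top hvolΘfin (measure_mono hS1Θ)
  set μ0 : ℝ := (volume S0).toReal with hμ0def
  set μ1 : ℝ := (volume S1).toReal with hμ1def
  have hμ0 : 0 < μ0 := ENNReal.toReal_pos hzero.ne' hS0fin
  have hμ1 : 0 < μ1 := ENNReal.toReal_pos hone.ne' hS1fin
  set ε : ℝ := r1 / 2 with hεdef
  have hε : 0 < ε := by positivity
  set c : ℝ := ε * μ0 / μ1 with hcdef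
  have hc : 0 < c := by positivity
  -- basic arithmetic facts
  have hb1a : b1 = a1 * r1 := by field_simp at hra; linarith
  have hb12a : b1 + b2 = a1 * r2 := by field_simp at hrb; linarith
  have hr1ℓ' : r1 * ℓ < 1 := by
    have := (lt_div_iff₀ hℓ).mp hr1ℓ; linarith
  have hr21 : r1 < r2 := by
    rw [hr2]; have : 0 < (1 - r1 * ℓ) / ∫ θ in Θ, IA θ := by
      apply div_pos; linarith; exact hIApos
    linarith
  -- the prior
  set pr : ℝ → ℝ := fun θ =>
    (r2 - r1) * IA θ + r1 + S0.indicator (fun _ => -ε) θ + S1.indicator (fun _ => c) θ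
    with hprdef
  have hS01 : ∀ θ, θ ∈ S0 → θ ∉ S1 := by
    intro θ h0 h1; have := h0.2; have := h1.2; norm_num [this] at *
  refine ⟨pr, ?_, ?_, ?_, ?_, ?_⟩
  · -- measurable
    apply Measurable.add
    apply Measurable.add
    · exact (measurable_const.mul hIAm).add measurable_const
    · exact (measurable_const.indicator hS0m)
    · exact (measurable_const.indicator hS1m)
  · -- nonneg
    intro θ hθ
    by_cases h0 : θ ∈ S0
    · have h1 : θ ∉ S1 := hS01 θ h0
      simp [hprdef, Set.indicator_of_mem h0, Set.indicator_of_notMem h1, h0.2]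
      linarith
    · have hIA0 : 0 ≤ IA θ := (hIA01 θ hθ).1
      have hi1 : (0:ℝ) ≤ S1.indicator (fun _ => c) θ := by
        apply Set.indicator_nonneg; intro _ _; linarith
      simp only [hprdef, Set.indicator_of_notMem h0]
      nlinarith
  · -- integral = 1
    have hIAint : IntegrableOn IA Θ := by
      refine Measure.integrableOn_of_bounded hvolΘfin hIAm.aestronglyMeasurable (M := 1) ?_
      filter_upwards [ae_restrict_mem hΘm] with x hx
      have := hIA01 x hx
      rw [Real.norm_eq_abs, abs_le]; constructor <;> linarith [this.1, this.2]
    have hπint : IntegrableOn (fun θ => (r2 - r1) * IA θ + r1) Θ :=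
      ((hIAint.const_mul _).add (integrableOn_const hvolΘfin))
    have hi0int : IntegrableOn (S0.indicator (fun _ => -ε)) Θ := by
      apply Integrable.indicator _ hS0m
      exact integrableOn_const hvolΘfin
    have hi1int : IntegrableOn (S1.indicator (fun _ => c)) Θ := by
      apply Integrable.indicator _ hS1m
      exact integrableOn_const hvolΘfin
    have e0 : ∫ θ in Θ, S0.indicator (fun _ => -ε) θ = -ε * μ0 := by
      rw [setIntegral_indicator hS0m, Set.inter_eq_self_of_subset_right hS0Θ,
        setIntegral_const, smul_eq_mul]
      rw [hμ0def, measureReal_def]; ring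
    have e1 : ∫ θ in Θ, S1.indicator (fun _ => c) θ = c * μ1 := by
      rw [setIntegral_indicator hS1m, Set.inter_eq_self_of_subset_right hS1Θ,
        setIntegral_const, smul_eq_mul]
      rw [hμ1def, measureReal_def]; ring
    have eπ : ∫ θ in Θ, ((r2 - r1) * IA θ + r1) = 1 := by
      rw [integral_add (hIAint.const_mul _) (integrableOn_const hvolΘfin),
        integral_const_mul, setIntegral_const, smul_eq_mul, measureReal_def, hvol,
        ENNReal.toReal_ofReal hℓ.le]
      rw [hr2]
      field_simp
      ring
    have key : ∫ θ in Θ, pr θ = (∫ θ in Θ, ((r2 - r1) * IA θ + r1))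
        + (∫ θ in Θ, S0.indicator (fun _ => -ε) θ)
        + ∫ θ in Θ, S1.indicator (fun _ => c) θ := by
      have hA : IntegrableOn
          (fun θ => (r2 - r1) * IA θ + r1 + S0.indicator (fun _ => -ε) θ) Θ :=
        hπint.add hi0int
      simp only [hprdef]
      rw [integral_add hA hi1int, integral_add hπint hi0int]
    rw [key, eπ, e0, e1, hcdef]
    field_simp
    ring
  · -- differs on positive measure set
    refine lt_of_lt_of_le hzero (measure_mono ?_)
    intro θ hθ
    refine ⟨hθ.1, ?_⟩
    have h1 : θ ∉ S1 := hS01 θ hθ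
    simp only [hprdef, Set.indicator_of_mem hθ, Set.indicator_of_notMem h1, hθ.2]
    intro h; norm_num at h; linarith
  · -- the solution equals IA
    intro θ hθ
    unfold thmOneSol
    by_cases h0 : θ ∈ S0
    · have h1 : θ ∉ S1 := hS01 θ h0
      have hv : pr θ = r1 - ε := by
        simp [hprdef, Set.indicator_of_mem h0, Set.indicator_of_notMem h1, h0.2]; ring
      rw [if_pos]
      · exact h0.2.symm
      · rw [hv]; rw [hb1a]; nlinarith
    · by_cases h1 : θ ∈ S1
      · have hv : pr θ = r2 + c := by
          simp [hprdef, Set.indicator_of_mem h1, Set.indicator_of_notMem h0, h1.2] <;> ring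
        rw [if_neg, if_neg]
        · exact h1.2.symm
        · rw [hv, hb12a]; push_neg; nlinarith
        · rw [hv, hb1a]; push_neg; nlinarith
      · have hv : pr θ = (r2 - r1) * IA θ + r1 := by
          simp [hprdef, Set.indicator_of_notMem h0, Set.indicator_of_notMem h1]
        have hIA0 : 0 ≤ IA θ := (hIA01 θ hθ).1
        have hIA1 : IA θ ≤ 1 := (hIA01 θ hθ).2
        rw [if_neg, if_pos]
        · rw [hv]
          have hb2' : b2 = a1 * (r2 - r1) := by linarith
          have hne : a1 * (r2 - r1) ≠ 0 := ne_of_gt (by nlinarith)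
          rw [hb1a, hb2']
          rw [div_eq_iff (by intro h; apply hne; linarith)]
          ring
        · rw [hv, hb12a]
          have h1' : (r2 - r1) * IA θ ≤ r2 - r1 :=
            mul_le_of_le_one_right (sub_nonneg.mpr hr21.le) hIA1
          have h2' : (r2 - r1) * IA θ + r1 ≤ r2 := by linarith
          calc a1 * ((r2 - r1) * IA θ + r1) ≤ a1 * r2 :=
                mul_le_mul_of_nonneg_left h2' ha1.le
            _ = a1 * r2 := rfl
        · rw [hv, hb1a]; push_neg
          have h1' : 0 ≤ (r2 - r1) * IA θ := mul_nonneg (sub_nonneg.mpr hr21.le) hIA0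
          have : a1 * r1 ≤ a1 * ((r2 - r1) * IA θ + r1) :=
            mul_le_mul_of_nonneg_left (by linarith) ha1.le
          linarith
end

section
/- Let Θ = [0,1], let a₁, a₂ > 0 and b₁ ≥ 0, b₂ > 0, and let I_A : [0,1] → (0,1) be measurable with 0 < I_A(θ) < 1 for all θ. Suppose π and π′ are measurable probability densities on [0,1] whose Theorem-1 solutions (for the parameters a₁, a₂, b₁, b₂) both equal I_A at every θ. Then π(θ) = π′(θ) = (b₁ + b₂ I_A(θ))/(a₁ + a₂(1 − I_A(θ))) for every θ ∈ [0,1]. That is, when the membership function never takes the values 0 or 1, the prior whose Theorem-1 solution is I_A is unique. -/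
open MeasureTheory

lemma thmOneSol_inv (a1 a2 b1 b2 : ℝ)
    (ha1 : 0 < a1) (ha2 : 0 < a2) (hb1 : 0 ≤ b1) (hb2 : 0 < b2)
    (p t : ℝ) (hp : 0 ≤ p) (ht : t ∈ Set.Ioo (0:ℝ) 1)
    (h : (if (a1 + a2) * p < b1 then (0:ℝ)
      else if a1 * p ≤ b1 + b2 then ((a1 + a2) * p - b1) / (a2 * p + b2)
      else 1) = t) :
    p = (b1 + b2 * t) / (a1 + a2 * (1 - t)) := by
  obtain ⟨ht0, ht1⟩ := ht
  split_ifs at h with h1 h2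
  · exact absurd h ht0.ne
  · have hd : 0 < a2 * p + b2 := by positivity
    have : (a1 + a2) * p - b1 = t * (a2 * p + b2) := by
      field_simp at h; linarith [h]
    have hden : 0 < a1 + a2 * (1 - t) := by nlinarith
    field_simp
    nlinarith [this]
  · exact absurd h.symm ht1.ne

/-- when the membership function `I_A` never takes the values
0 or 1, the prior on `[0,1]` whose Theorem-1 solution is `I_A` is unique:
any two such priors both equal `(b₁ + b₂ I_A(θ))/(a₁ + a₂(1 − I_A(θ)))`
everywhere on `[0,1]`. -/
theorem stmt14 (a1 a2 b1 b2 : ℝ)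
    (ha1 : 0 < a1) (ha2 : 0 < a2) (hb1 : 0 ≤ b1) (hb2 : 0 < b2)
    (IA : ℝ → ℝ) (hIAm : Measurable IA)
    (hIA : ∀ θ ∈ Set.Icc (0 : ℝ) 1, IA θ ∈ Set.Ioo (0 : ℝ) 1)
    (pr pr' : ℝ → ℝ)
    (hprm : Measurable pr) (hpr0 : ∀ θ ∈ Set.Icc (0 : ℝ) 1, 0 ≤ pr θ)
    (hprdens : (∫ θ in Set.Icc (0 : ℝ) 1, pr θ) = 1)
    (hprm' : Measurable pr') (hpr0' : ∀ θ ∈ Set.Icc (0 : ℝ) 1, 0 ≤ pr' θ)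
    (hprdens' : (∫ θ in Set.Icc (0 : ℝ) 1, pr' θ) = 1)
    (hsol : ∀ θ ∈ Set.Icc (0 : ℝ) 1, thmOneSol a1 a2 b1 b2 pr θ = IA θ)
    (hsol' : ∀ θ ∈ Set.Icc (0 : ℝ) 1, thmOneSol a1 a2 b1 b2 pr' θ = IA θ) :
    ∀ θ ∈ Set.Icc (0 : ℝ) 1,
      pr θ = (b1 + b2 * IA θ) / (a1 + a2 * (1 - IA θ)) ∧
      pr' θ = (b1 + b2 * IA θ) / (a1 + a2 * (1 - IA θ)) := by
  intro θ hθ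
  exact ⟨thmOneSol_inv a1 a2 b1 b2 ha1 ha2 hb1 hb2 _ _ (hpr0 θ hθ) (hIA θ hθ) (hsol θ hθ),
    thmOneSol_inv a1 a2 b1 b2 ha1 ha2 hb1 hb2 _ _ (hpr0' θ hθ) (hIA θ hθ) (hsol' θ hθ)⟩
end

section
/- Let Θ = ℝ and fix a₁ = a₂ = b₁ = b₂ = 1. Let I_A : ℝ → [0,1] be the constant function I_A(θ) = 1/2. Then there is no measurable probability density π : ℝ → [0,∞) whose Theorem-1 solution (for these parameters) equals I_A at every θ. (Indeed, equation (3) would force π to be a positive constant on all of ℝ, which is not integrable.) Hence the answer to the paper's first question is no: for a specified membership function and a specified loss function, a prior density yielding that membership function as the solution need not exist. -/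
open MeasureTheory

/-- on `Θ = ℝ` with `a₁ = a₂ = b₁ = b₂ = 1`, no probability
density has the constant membership function `1/2` as its Theorem-1 solution
(equation (3) would force the prior to be a positive constant on all of `ℝ`,
which cannot integrate to one). -/
theorem stmt15 :
    ¬ ∃ pr : ℝ → ℝ, Measurable pr ∧ (∀ θ : ℝ, 0 ≤ pr θ) ∧
      (∫⁻ θ : ℝ, ENNReal.ofReal (pr θ)) = 1 ∧
      ∀ θ : ℝ, thmOneSol 1 1 1 1 pr θ = 1 / 2 := by
  rintro ⟨pr, -, hnn, hint, hsol⟩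
  have hone : ∀ θ : ℝ, pr θ = 1 := by
    intro θ
    have h := hsol θ
    have h0 := hnn θ
    unfold thmOneSol at h
    split_ifs at h with h1 h2
    · norm_num at h
    · push_neg at h1
      have hpos : pr θ + 1 > 0 := by linarith
      rw [div_eq_iff (by linarith : (1:ℝ) * pr θ + 1 ≠ 0)] at h
      nlinarith [h]
    · norm_num at h
  have : (∫⁻ θ : ℝ, ENNReal.ofReal (pr θ)) = ⊤ := by
    simp only [hone]
    simp [lintegral_const]
  rw [this] at hint
  exact absurd hint (by norm_num)
end

section
/- Let Θ be an unbounded interval of ℝ (infinite Lebesgue measure), let I_A : Θ → [0,1] be an integrable membership function with ∫_Θ I_A(θ) dθ > 0, and suppose I_A(θ) < 1 for all θ. Set a₁ = 1, a₂ = 0, b₁ = 0, and b₂ = 1/∫_Θ I_A(θ) dθ > 0. Then π(θ) = b₂ · I_A(θ) is a probability density on Θ whose Theorem-1 solution (for these parameters) equals I_A at every θ with I_A(θ) < 1; in particular, for every integrable membership function there exist a loss function and a prior density realizing it (answering the paper's second question affirmatively). -/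
open MeasureTheory

/-- for an unbounded interval `Θ` and an integrable membership
function `I_A` with `∫_Θ I_A > 0` and `I_A < 1` on `Θ`, taking `a₁ = 1`,
`a₂ = 0`, `b₁ = 0` and `b₂ = 1/∫_Θ I_A`, the function `π = b₂ · I_A` is a
probability density on `Θ` whose Theorem-1 solution equals `I_A` at every
`θ ∈ Θ` with `I_A(θ) < 1`; so every integrable membership function is realized
by some loss function and prior density. -/
theorem stmt16 (Θ : Set ℝ) (hΘ : Θ.OrdConnected) (hΘm : MeasurableSet Θ)
    (hΘinf : volume Θ = ⊤)
    (IA : ℝ → ℝ) (hIAm : Measurable IA)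
    (hIA01 : ∀ θ ∈ Θ, IA θ ∈ Set.Icc (0 : ℝ) 1)
    (hIAlt1 : ∀ θ ∈ Θ, IA θ < 1)
    (hIAint : IntegrableOn IA Θ)
    (hIApos : 0 < ∫ θ in Θ, IA θ)
    (b2 : ℝ) (hb2 : b2 = 1 / ∫ θ in Θ, IA θ) :
    0 < b2 ∧ (∀ θ ∈ Θ, 0 ≤ b2 * IA θ) ∧
    (∫ θ in Θ, b2 * IA θ) = 1 ∧
    (∀ θ ∈ Θ, IA θ < 1 →
      thmOneSol 1 0 0 b2 (fun u => b2 * IA u) θ = IA θ) := by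
  have hb2pos : 0 < b2 := by
    rw [hb2]; positivity
  refine ⟨hb2pos, ?_, ?_, ?_⟩
  · intro θ hθ
    exact mul_nonneg hb2pos.le (hIA01 θ hθ).1
  · rw [MeasureTheory.integral_const_mul, hb2]
    field_simp
  · intro θ hθ hlt
    have h0 : 0 ≤ IA θ := (hIA01 θ hθ).1
    have h1 : b2 * IA θ ≤ b2 := by
      nlinarith
    have hge : ¬ ((1 + 0) * (b2 * IA θ) < 0) := by
      push_neg; positivity
    simp only [thmOneSol, hge, if_false]
    rw [if_pos (by linarith)]
    field_simp
    ring
end
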